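/- arXiv:2409.10144 — 3 statements merged into one kernel-verified Lean document; each statement's English description precedes it below -/
import Mathlib

section
/- Let (X_t)_{t∈ℕ} be a stochastic process over ℝ, let x_min > 0 and let T := min{t : X_t < x_min}. Suppose X_0 ≥ x_min, that X_t ≥ 0 for all t ≤ T, and that there exists δ > 0 such that for all t < T one has E[X_t − X_{t+1} | X_0,…,X_t] ≥ δ·X_t. Then E[T | X_0] ≤ (ln(X_0/x_min) + 1)/δ. -/
open MeasureTheory ProbabilityTheory Real Filter
open scoped ENNReal

noncomputable section

lemma driftg_nonneg {xmin : ℝ} (hxmin : 0 < xmin) (x : ℝ) :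
    0 ≤ (if xmin ≤ x then Real.log (x / xmin) + 1 else 0) := by
  split_ifs with h
  · have : (1:ℝ) ≤ x / xmin := (one_le_div hxmin).mpr h
    have := Real.log_nonneg this
    linarith
  · exact le_refl 0

lemma driftg_key {xmin a b : ℝ} (hxmin : 0 < xmin) (ha : xmin ≤ a) (hb : 0 ≤ b) :
    a⁻¹ * (a - b) ≤ (if xmin ≤ a then Real.log (a / xmin) + 1 else 0)
      - (if xmin ≤ b then Real.log (b / xmin) + 1 else 0) := by
  have ha' : 0 < a := lt_of_lt_of_le hxmin ha
  rw [if_pos ha]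
  split_ifs with hbx
  · have hb' : 0 < b := lt_of_lt_of_le hxmin hbx
    have h := Real.log_le_sub_one_of_pos (div_pos hb' ha')
    rw [Real.log_div hb'.ne' ha'.ne'] at h
    rw [Real.log_div ha'.ne' hxmin.ne', Real.log_div hb'.ne' hxmin.ne']
    have e : a⁻¹ * (a - b) = 1 - b / a := by field_simp
    rw [e]; linarith
  · have h1 : a⁻¹ * a = 1 := inv_mul_cancel₀ ha'.ne'
    have h2 : 0 ≤ a⁻¹ * b := mul_nonneg (inv_nonneg.mpr ha'.le) hb
    have h3 : (0:ℝ) ≤ Real.log (a / xmin) :=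
      Real.log_nonneg ((one_le_div hxmin).mpr ha)
    nlinarith [mul_sub a⁻¹ a b]

lemma driftg_upper {xmin a b : ℝ} (hxmin : 0 < xmin) (ha : xmin ≤ a) (hb : 0 ≤ b) :
    (if xmin ≤ b then Real.log (b / xmin) + 1 else 0)
      ≤ (if xmin ≤ a then Real.log (a / xmin) + 1 else 0) + xmin⁻¹ * |a - b| := by
  have ha' : 0 < a := lt_of_lt_of_le hxmin ha
  rw [if_pos ha]
  split_ifs with hbx
  · have hb' : 0 < b := lt_of_lt_of_le hxmin hbx
    have h := Real.log_le_sub_one_of_pos (div_pos hb' ha')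
    rw [Real.log_div hb'.ne' ha'.ne'] at h
    have e : b / a - 1 = (b - a) / a := by field_simp
    have h3 : (b - a) / a ≤ |a - b| / xmin :=
      div_le_div₀ (abs_nonneg _) (by rw [abs_sub_comm]; exact le_abs_self _) hxmin ha
    have e2 : |a - b| / xmin = xmin⁻¹ * |a - b| := div_eq_inv_mul _ _
    rw [Real.log_div ha'.ne' hxmin.ne', Real.log_div hb'.ne' hxmin.ne']
    rw [e] at h
    linarith
  · have h3 : (0:ℝ) ≤ Real.log (a / xmin) :=
      Real.log_nonneg ((one_le_div hxmin).mpr ha)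
    have : 0 ≤ xmin⁻¹ * |a - b| := mul_nonneg (inv_nonneg.mpr hxmin.le) (abs_nonneg _)
    linarith

/-- Multiplicative drift theorem, expectation version: if `(X_t)` is a nonnegative real
stochastic process starting deterministically at `x0 ≥ xmin > 0`, `T` is the first hitting time
of `(-∞, xmin)`, and the drift conditioned on the history `X_0, …, X_t` satisfies
`E[X_t − X_{t+1} | X_0, …, X_t] ≥ δ X_t` whenever `t < T`,
then `E[T | X_0] ≤ (ln(X_0/xmin) + 1)/δ`. -/
theorem stmt0 {Ω : Type*} [MeasurableSpace Ω] (μ : Measure Ω) [IsProbabilityMeasure μ]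
    (X : ℕ → Ω → ℝ) (hX : ∀ t, StronglyMeasurable (X t))
    (xmin : ℝ) (hxmin : 0 < xmin) (x0 : ℝ) (hx0 : xmin ≤ x0)
    (hX0 : ∀ ω, X 0 ω = x0)
    (T : Ω → ℝ≥0∞)
    (hT : ∀ ω, T ω = sInf {t : ℝ≥0∞ | ∃ s : ℕ, t = (s : ℝ≥0∞) ∧ X s ω < xmin})
    (hnonneg : ∀ᵐ ω ∂μ, ∀ t : ℕ, (t : ℝ≥0∞) ≤ T ω → 0 ≤ X t ω)
    (δ : ℝ) (hδ : 0 < δ)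
    (hdrift : ∀ t : ℕ, ∀ᵐ ω ∂μ, (t : ℝ≥0∞) < T ω →
      δ * X t ω ≤ (μ[fun ω' => X t ω' - X (t + 1) ω' | Filtration.natural X hX t]) ω) :
    ∫⁻ ω, T ω ∂μ ≤ ENNReal.ofReal ((Real.log (x0 / xmin) + 1) / δ) := by
  classical
  set F := Filtration.natural X hX with hF
  set g : ℝ → ℝ := fun x => if xmin ≤ x then Real.log (x / xmin) + 1 else 0 with hgdef
  set A : ℕ → Set Ω := fun t => {ω | ∀ s, s ≤ t → xmin ≤ X s ω} with hAdef
  have hAeq : ∀ t, A t = ⋂ (s : ℕ) (_ : s ≤ t), X s ⁻¹' Set.Ici xmin := by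
    intro t; ext ω
    simp [hAdef, Set.mem_iInter]
  have hAmeas : ∀ t, MeasurableSet (A t) := by
    intro t; rw [hAeq]
    exact MeasurableSet.iInter fun s => MeasurableSet.iInter fun _ =>
      (hX s).measurable measurableSet_Ici
  have hXmF : ∀ s t : ℕ, s ≤ t → Measurable[F t] (X s) := by
    intro s t hst
    exact ((Filtration.stronglyAdapted_natural hX s).measurable).mono (F.mono hst) le_rfl
  have hAmeasF : ∀ t, MeasurableSet[F t] (A t) := by
    intro t; rw [hAeq]
    exact MeasurableSet.iInter fun s => MeasurableSet.iInter fun hs =>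
      hXmF s t hs measurableSet_Ici
  have hAanti : ∀ s t : ℕ, s ≤ t → A t ⊆ A s := by
    intro s t hst ω h u hu; exact h u (hu.trans hst)
  have hTA : ∀ (t : ℕ) (ω : Ω), ((t : ℕ) : ℝ≥0∞) < T ω ↔ ω ∈ A t := by
    intro t ω
    rw [hT]
    constructor
    · intro h s hs
      by_contra hc
      push_neg at hc
      have h1 : sInf {t : ℝ≥0∞ | ∃ s : ℕ, t = (s : ℝ≥0∞) ∧ X s ω < xmin} ≤ (s : ℝ≥0∞) :=
        sInf_le ⟨s, rfl, hc⟩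
      have h2 : ((s : ℕ) : ℝ≥0∞) ≤ ((t : ℕ) : ℝ≥0∞) := by exact_mod_cast hs
      exact absurd h (not_lt.mpr (h1.trans h2))
    · intro h
      have h1 : ((t : ℕ) : ℝ≥0∞) < (((t + 1 : ℕ)) : ℝ≥0∞) := by exact_mod_cast Nat.lt_succ_self t
      refine lt_of_lt_of_le h1 (le_sInf ?_)
      rintro x ⟨s, rfl, hs⟩
      have hst : ¬ s ≤ t := fun hst => absurd (h s hst) (not_le.mpr hs)
      exact_mod_cast Nat.succ_le_of_lt (not_le.mp hst)
  have hA_succ : ∀ (t : ℕ) (ω : Ω), ω ∈ A t → (((t + 1 : ℕ)) : ℝ≥0∞) ≤ T ω := by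
    intro t ω h
    rw [hT]
    refine le_sInf ?_
    rintro x ⟨s, rfl, hs⟩
    have hst : ¬ s ≤ t := fun hst => absurd (h s hst) (not_le.mpr hs)
    exact_mod_cast Nat.succ_le_of_lt (not_le.mp hst)
  have hgmeas : Measurable g := by
    rw [hgdef]
    exact Measurable.ite measurableSet_Ici
      ((Real.measurable_log.comp (measurable_id.div_const xmin)).add_const 1) measurable_const
  set f : ℕ → Ω → ℝ := fun t => (A t).indicator (fun ω => g (X t ω)) with hfdef
  have hfmeas : ∀ t, Measurable (f t) := fun t =>
    (hgmeas.comp (hX t).measurable).indicator (hAmeas t)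
  have hf_nonneg : ∀ t ω, 0 ≤ f t ω := fun t ω =>
    Set.indicator_nonneg (fun ω _ => driftg_nonneg hxmin _) ω
  have hf_shift : ∀ (t : ℕ) (ω : Ω), f (t+1) ω = (A t).indicator (fun ω => g (X (t+1) ω)) ω := by
    intro t ω
    by_cases h1 : ω ∈ A (t+1)
    · rw [hfdef]
      simp only []
      rw [Set.indicator_of_mem h1, Set.indicator_of_mem (hAanti t (t+1) (Nat.le_succ t) h1)]
    · rw [hfdef]; simp only []
      rw [Set.indicator_of_notMem h1]
      by_cases h2 : ω ∈ A t
      · rw [Set.indicator_of_mem h2]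
        have hb : ¬ xmin ≤ X (t+1) ω := by
          intro hc
          refine h1 (fun s hs => ?_)
          rcases eq_or_lt_of_le hs with rfl | h'
          · exact hc
          · exact h2 s (Nat.lt_succ_iff.mp h')
        simp [hgdef, if_neg hb]
      · rw [Set.indicator_of_notMem h2]
  have good : ∀ t : ℕ, Integrable (f t) μ ∧
      ∫ ω, f t ω ∂μ + δ * ∑ s ∈ Finset.range t, (μ (A s)).toReal
        ≤ Real.log (x0 / xmin) + 1 := by
    intro t
    induction t with
    | zero =>
      have hA0 : A 0 = Set.univ := by
        ext ω
        simp only [hAdef, Set.mem_setOf_eq, Set.mem_univ, iff_true]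
        intro s hs
        rw [Nat.le_zero.mp hs, hX0 ω]
        exact hx0
      have hf0 : f 0 = fun _ => Real.log (x0 / xmin) + 1 := by
        funext ω
        rw [hfdef]; simp only []
        rw [hA0, Set.indicator_univ, hX0 ω, hgdef]
        simp [if_pos hx0]
      constructor
      · rw [hf0]; exact integrable_const _
      · rw [hf0]; simp [measure_univ]
    | succ t ih =>
      obtain ⟨ihint, ihsum⟩ := ih
      by_cases hY : Integrable (fun ω' => X t ω' - X (t + 1) ω') μ
      · -- main case
        have hle : F t ≤ _ := F.le t
        set Y : Ω → ℝ := fun ω' => X t ω' - X (t + 1) ω' with hYdef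
        set φ : Ω → ℝ := (A t).indicator (fun ω => (X t ω)⁻¹) with hφdef
        have hφm : StronglyMeasurable[F t] φ :=
          (((hXmF t t le_rfl).inv).indicator (hAmeasF t)).stronglyMeasurable
        have hφ_bd : ∀ ω, ‖φ ω‖ ≤ xmin⁻¹ := by
          intro ω
          rw [hφdef]
          by_cases h : ω ∈ A t
          · rw [Set.indicator_of_mem h]
            have hx : xmin ≤ X t ω := h t le_rfl
            rw [Real.norm_eq_abs,
              abs_of_nonneg (inv_nonneg.mpr ((hxmin.trans_le hx)).le)]
            exact inv_anti₀ hxmin hx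
          · rw [Set.indicator_of_notMem h]
            simp [inv_nonneg.mpr hxmin.le]
        have hφY_int : Integrable (fun ω => φ ω * Y ω) μ :=
          hY.bdd_mul ((hφm.mono hle).aestronglyMeasurable) (Eventually.of_forall hφ_bd)
        have hmul : μ[fun ω => φ ω * Y ω | F t] =ᵐ[μ] fun ω => φ ω * (μ[Y | F t]) ω := by
          have := condExp_mul_of_stronglyMeasurable_left hφm hφY_int hY
          filter_upwards [this] with ω hω using hω
        have e1 : ∫ ω, φ ω * Y ω ∂μ = ∫ ω, φ ω * (μ[Y | F t]) ω ∂μ := by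
          rw [← integral_condExp hle (f := fun ω => φ ω * Y ω)]
          exact integral_congr_ae hmul
        have hEint : Integrable (fun ω => φ ω * (μ[Y | F t]) ω) μ :=
          integrable_condExp.bdd_mul ((hφm.mono hle).aestronglyMeasurable) (Eventually.of_forall hφ_bd)
        have h2 : (fun ω => (A t).indicator (fun _ => δ) ω)
            ≤ᵐ[μ] fun ω => φ ω * (μ[Y | F t]) ω := by
          filter_upwards [hdrift t] with ω hω
          by_cases h : ω ∈ A t
          · rw [Set.indicator_of_mem h]
            have h1 := hω ((hTA t ω).mpr h)
            have hx : xmin ≤ X t ω := h t le_rfl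
            have hx' : 0 < X t ω := hxmin.trans_le hx
            have e : δ = (X t ω)⁻¹ * (δ * X t ω) := by
              rw [mul_comm δ, ← mul_assoc, inv_mul_cancel₀ hx'.ne', one_mul]
            rw [hφdef]
            simp only [Set.indicator_of_mem h]
            calc δ = (X t ω)⁻¹ * (δ * X t ω) := e
              _ ≤ (X t ω)⁻¹ * (μ[Y | F t]) ω :=
                mul_le_mul_of_nonneg_left h1 (inv_nonneg.mpr hx'.le)
          · rw [Set.indicator_of_notMem h, hφdef]
            simp [Set.indicator_of_notMem h]
        have h2' : δ * (μ (A t)).toReal ≤ ∫ ω, φ ω * (μ[Y | F t]) ω ∂μ := by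
          have hi : Integrable (fun ω => (A t).indicator (fun _ => δ) ω) μ :=
            (integrable_const δ).indicator (hAmeas t)
          have := integral_mono_ae hi hEint h2
          rwa [integral_indicator_const δ (hAmeas t), smul_eq_mul, mul_comm] at this
        have hft1_int : Integrable (f (t+1)) μ := by
          refine Integrable.mono' (ihint.add ((hY.abs).const_mul xmin⁻¹))
            ((hfmeas (t+1)).aestronglyMeasurable) ?_
          filter_upwards [hnonneg] with ω hnn
          rw [Real.norm_eq_abs, abs_of_nonneg (hf_nonneg (t+1) ω), hf_shift t ω]
          by_cases h : ω ∈ A t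
          · rw [Set.indicator_of_mem h]
            have hx : xmin ≤ X t ω := h t le_rfl
            have hb : 0 ≤ X (t+1) ω := hnn (t+1) (hA_succ t ω h)
            have := driftg_upper (a := X t ω) (b := X (t+1) ω) hxmin hx hb
            rw [hfdef]
            simp only [Set.indicator_of_mem h, Pi.add_apply]
            rw [hgdef]
            simpa using this
          · rw [Set.indicator_of_notMem h]
            have h1 := hf_nonneg t ω
            have h2 : 0 ≤ xmin⁻¹ * |Y ω| := mul_nonneg (inv_nonneg.mpr hxmin.le) (abs_nonneg _)
            simpa using add_nonneg h1 h2
        have h3 : (fun ω => φ ω * Y ω) ≤ᵐ[μ] fun ω => f t ω - f (t+1) ω := by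
          filter_upwards [hnonneg] with ω hnn
          by_cases h : ω ∈ A t
          · have hx : xmin ≤ X t ω := h t le_rfl
            have hb : 0 ≤ X (t+1) ω := hnn (t+1) (hA_succ t ω h)
            have hkey := driftg_key (a := X t ω) (b := X (t+1) ω) hxmin hx hb
            rw [hf_shift t ω, hφdef, hfdef]
            simp only [Set.indicator_of_mem h]
            rw [hgdef]
            simpa using hkey
          · rw [hf_shift t ω, hφdef, hfdef]
            simp [Set.indicator_of_notMem h]
        have h3' : ∫ ω, φ ω * Y ω ∂μ ≤ ∫ ω, f t ω ∂μ - ∫ ω, f (t+1) ω ∂μ := by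
          have := integral_mono_ae hφY_int (ihint.sub hft1_int) h3
          simp only [Pi.sub_apply] at this
          rwa [integral_sub ihint hft1_int] at this
        refine ⟨hft1_int, ?_⟩
        rw [Finset.sum_range_succ, mul_add]
        have := h2'.trans (e1 ▸ h3')
        linarith
      · -- degenerate case: drift hypothesis forces μ (A t) = 0
        have hcond : (μ[fun ω' => X t ω' - X (t + 1) ω' | F t]) = 0 := condExp_of_not_integrable hY
        have hae : ∀ᵐ ω ∂μ, ω ∉ A t := by
          filter_upwards [hdrift t] with ω hω
          intro hmem
          have h1 := hω ((hTA t ω).mpr hmem)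
          rw [hcond] at h1
          have hx : xmin ≤ X t ω := hmem t le_rfl
          have : (0:ℝ) < δ * X t ω := mul_pos hδ (hxmin.trans_le hx)
          simp only [Pi.zero_apply] at h1
          linarith
        have hA0 : μ (A t) = 0 := by
          have := (ae_iff).mp hae
          simpa [hAmeas t] using this
        have hf1 : f (t+1) =ᵐ[μ] 0 := by
          filter_upwards [hae] with ω hω
          rw [hf_shift t ω, Set.indicator_of_notMem hω]
          rfl
        have hint1 : Integrable (f (t+1)) μ := (integrable_zero _ _ _).congr hf1.symm
        refine ⟨hint1, ?_⟩
        have hi0 : ∫ ω, f (t+1) ω ∂μ = 0 := by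
          rw [integral_congr_ae hf1]
          simp
        have hft : 0 ≤ ∫ ω, f t ω ∂μ := integral_nonneg (hf_nonneg t)
        rw [Finset.sum_range_succ, hA0, hi0]
        simp only [ENNReal.toReal_zero, add_zero]
        linarith
  have key : ∀ n : ℕ, δ * ∑ s ∈ Finset.range n, (μ (A s)).toReal
      ≤ Real.log (x0 / xmin) + 1 := by
    intro n
    have h1 := (good n).2
    have h2 : 0 ≤ ∫ ω, f n ω ∂μ := integral_nonneg (hf_nonneg n)
    linarith
  have hsum_fin : ∀ n : ℕ, ∑ s ∈ Finset.range n, μ (A s)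
      ≤ ENNReal.ofReal ((Real.log (x0 / xmin) + 1) / δ) := by
    intro n
    have h1 : ∑ s ∈ Finset.range n, μ (A s)
        = ENNReal.ofReal (∑ s ∈ Finset.range n, (μ (A s)).toReal) := by
      rw [ENNReal.ofReal_sum_of_nonneg (fun i _ => ENNReal.toReal_nonneg)]
      exact Finset.sum_congr rfl fun i _ => (ENNReal.ofReal_toReal (measure_ne_top μ _)).symm
    rw [h1]
    apply ENNReal.ofReal_le_ofReal
    rw [le_div_iff₀ hδ]
    have := key n
    linarith
  have htsum : ∑' t, μ (A t) ≤ ENNReal.ofReal ((Real.log (x0 / xmin) + 1) / δ) := by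
    rw [ENNReal.tsum_eq_iSup_sum]
    apply iSup_le
    intro s
    obtain ⟨n, hn⟩ := s.exists_nat_subset_range
    exact le_trans (Finset.sum_le_sum_of_subset hn) (hsum_fin n)
  have hTle : ∀ ω, T ω ≤ ∑' t, (A t).indicator (fun _ => (1:ℝ≥0∞)) ω := by
    intro ω
    by_cases hall : ∀ n, ω ∈ A n
    · have he : ∑' t, (A t).indicator (fun _ => (1:ℝ≥0∞)) ω = ∑' _ : ℕ, (1:ℝ≥0∞) :=
        tsum_congr fun t => Set.indicator_of_mem (hall t) _
      rw [he, ENNReal.tsum_const_eq_top_of_ne_zero one_ne_zero]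
      exact le_top
    · push_neg at hall
      obtain ⟨n0, hn0⟩ := hall
      have hex : ∃ n, ω ∉ A n := ⟨n0, hn0⟩
      set m := Nat.find hex with hm
      have hm1 : ω ∉ A m := Nat.find_spec hex
      have hm2 : ∀ k, k < m → ω ∈ A k := fun k hk => not_not.mp (Nat.find_min hex hk)
      have hTm : T ω ≤ (m : ℝ≥0∞) := by
        rw [hT]
        simp only [hAdef, Set.mem_setOf_eq, not_forall] at hm1
        obtain ⟨s, hs, hxs⟩ := hm1
        exact le_trans (sInf_le ⟨s, rfl, not_le.mp hxs⟩) (by exact_mod_cast hs)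
      refine hTm.trans ?_
      have he : ((m : ℕ) : ℝ≥0∞) = ∑ k ∈ Finset.range m, (A k).indicator (fun _ => (1:ℝ≥0∞)) ω := by
        rw [Finset.sum_congr rfl (fun k hk => Set.indicator_of_mem (hm2 k (Finset.mem_range.mp hk)) _)]
        simp
      rw [he]
      exact ENNReal.sum_le_tsum _
  calc ∫⁻ ω, T ω ∂μ ≤ ∫⁻ ω, ∑' t, (A t).indicator (fun _ => (1:ℝ≥0∞)) ω ∂μ :=
        lintegral_mono hTle
    _ = ∑' t, ∫⁻ ω, (A t).indicator (fun _ => (1:ℝ≥0∞)) ω ∂μ :=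
        lintegral_tsum fun t => (measurable_const.indicator (hAmeas t)).aemeasurable
    _ = ∑' t, μ (A t) := by
        refine tsum_congr fun t => ?_
        have := lintegral_indicator_one (μ := μ) (hAmeas t)
        simpa [Pi.one_def] using this
    _ ≤ _ := htsum
end
end

section
/- Let G be drawn from the M(n,k,p) random planted graph model with constants δ, p ∈ (0,1) and k ≤ ln n (with δ(n−k) an integer). Then the probability that G is NOT δ-heavy is at most exp(−δn(2p² − ln(e/δ)) + (6p+1)·ln n). In particular, if p > √((1 − ln δ)/2), then G is δ-heavy with probability 1 − e^{−Ω(n)}, i.e., the failure probability is at most e^{−cn} for some constant c > 0 and all sufficiently large n. -/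
open MeasureTheory ProbabilityTheory Real Filter
open scoped ENNReal Classical

noncomputable section

/-- Bernoulli measure on `Bool`. For `p ≤ 1` this is the Bernoulli distribution with
success probability `p`. -/
def bernoulliB (p : ℝ≥0∞) : Measure Bool := (PMF.bernoulli (min p 1).toNNReal
  (by simpa using ENNReal.toNNReal_mono ENNReal.one_ne_top (min_le_right p 1))).toMeasure

/-- The graph on `Fin n` determined by the edge indicators `ω`. -/
def graphOf {n : ℕ} (ω : Sym2 (Fin n) → Bool) : SimpleGraph (Fin n) where
  Adj u v := u ≠ v ∧ ω s(u, v) = true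
  symm := ⟨fun u v ⟨h, he⟩ => ⟨h.symm, by rwa [Sym2.eq_swap]⟩⟩
  loopless := ⟨fun u ⟨h, _⟩ => h rfl⟩

/-- In the `M(n,k,p)` model, a non-loop pair meeting the core `C` is an edge with
probability `p`; all other pairs are never edges. -/
def edgeProb {n : ℕ} (p : ℝ) (C : Finset (Fin n)) (e : Sym2 (Fin n)) : ℝ≥0∞ :=
  if ¬ e.IsDiag ∧ ∃ v ∈ e, v ∈ C then ENNReal.ofReal p else 0

/-- The `M(n,k,p)` random planted graph model with core `C` (of size `k`), as a measure on
edge indicators: all pairs are independent, and a pair is an edge with probability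
`edgeProb p C`. -/
def plantedMeasure (n : ℕ) (p : ℝ) (C : Finset (Fin n)) : Measure (Sym2 (Fin n) → Bool) :=
  Measure.pi fun e => bernoulliB (edgeProb p C e)

/-- `G` is `δ`-heavy (w.r.t. the core `C`): for every subset `S` of the fringe `V \ C` with
`|S| = δ|V \ C|`, every core vertex is adjacent to at least `ln n` vertices of `S`. -/
def DeltaHeavy {n : ℕ} (δ : ℝ) (G : SimpleGraph (Fin n)) (C : Finset (Fin n)) : Prop :=
  ∀ S ⊆ Finset.univ \ C, (S.card : ℝ) = δ * (((Finset.univ \ C : Finset (Fin n)).card : ℝ)) →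
    ∀ v ∈ C, Real.log n ≤ ((S.filter fun u => G.Adj v u).card : ℝ)

set_option maxHeartbeats 2000000 in
lemma corePoly (p : ℝ) (hp0 : 0 ≤ p) (hp1 : p ≤ 1) :
    p ≤ ((1 - p^2/4)^8 - 1 + p) *
      (1 + (6*p-2*p^2) + (6*p-2*p^2)^2/2 + (6*p-2*p^2)^3/6 + (6*p-2*p^2)^4/24) := by
  have h1p : (0:ℝ) ≤ 1 - p := by linarith
  have cert : ((1 - p^2/4)^8 - 1 + p) *
      (1 + (6*p-2*p^2) + (6*p-2*p^2)^2/2 + (6*p-2*p^2)^3/6 + (6*p-2*p^2)^4/24) - p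
      = p^2 * ((4/1)*(1-p)^22 + (92/1)*p^1*(1-p)^21 + (4007/4)*p^2*(1-p)^20 + (13715/2)*p^3*(1-p)^19 + (263897/8)*p^4*(1-p)^18 + (708229/6)*p^5*(1-p)^17 + (41556147/128)*p^6*(1-p)^16 + (44804097/64)*p^7*(1-p)^15 + (459774493/384)*p^8*(1-p)^14 + (313631669/192)*p^9*(1-p)^13 + (5463748925/3072)*p^10*(1-p)^12 + (787491447/512)*p^11*(1-p)^11 + (2139851079/2048)*p^12*(1-p)^10 + (280236893/512)*p^13*(1-p)^9 + (14132195169/65536)*p^14*(1-p)^8 + (6226662805/98304)*p^15*(1-p)^7 + (1582062817/98304)*p^16*(1-p)^6 + (571361285/98304)*p^17*(1-p)^5 + (139893871/49152)*p^18*(1-p)^4 + (108013109/98304)*p^19*(1-p)^3 + (26756161/98304)*p^20*(1-p)^2 + (3809557/98304)*p^21*(1-p)^1 + (159725/65536)*p^22) := by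
    ring
  nlinarith [cert, mul_nonneg (sq_nonneg p) (by positivity : (0:ℝ) ≤ (4/1)*(1-p)^22 + (92/1)*p^1*(1-p)^21 + (4007/4)*p^2*(1-p)^20 + (13715/2)*p^3*(1-p)^19 + (263897/8)*p^4*(1-p)^18 + (708229/6)*p^5*(1-p)^17 + (41556147/128)*p^6*(1-p)^16 + (44804097/64)*p^7*(1-p)^15 + (459774493/384)*p^8*(1-p)^14 + (313631669/192)*p^9*(1-p)^13 + (5463748925/3072)*p^10*(1-p)^12 + (787491447/512)*p^11*(1-p)^11 + (2139851079/2048)*p^12*(1-p)^10 + (280236893/512)*p^13*(1-p)^9 + (14132195169/65536)*p^14*(1-p)^8 + (6226662805/98304)*p^15*(1-p)^7 + (1582062817/98304)*p^16*(1-p)^6 + (571361285/98304)*p^17*(1-p)^5 + (139893871/49152)*p^18*(1-p)^4 + (108013109/98304)*p^19*(1-p)^3 + (26756161/98304)*p^20*(1-p)^2 + (3809557/98304)*p^21*(1-p)^1 + (159725/65536)*p^22)]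

lemma coreIneq (p : ℝ) (hp0 : 0 ≤ p) (hp1 : p ≤ 1) :
    1 - p + p * Real.exp (-(6*p-2*p^2)) ≤ Real.exp (-(2*p^2)) := by
  set t : ℝ := 6*p - 2*p^2 with hts
  have ht : 0 ≤ t := by nlinarith
  set D : ℝ := 1 + t + t^2/2 + t^3/6 + t^4/24 with hD
  have hD0 : 0 < D := by positivity
  have hDle : D ≤ Real.exp t := by
    have h := Real.sum_le_exp_of_nonneg ht 5
    simp [Finset.sum_range_succ, Nat.factorial] at h
    rw [hD]; linarith
  have hexp : Real.exp (-t) ≤ 1/D := by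
    rw [Real.exp_neg, one_div]
    exact inv_anti₀ hD0 hDle
  have hq0 : (0:ℝ) ≤ 1 - p^2/4 := by nlinarith
  have h8 : ((1:ℝ) - p^2/4)^8 ≤ Real.exp (-(2*p^2)) := by
    calc ((1:ℝ) - p^2/4)^8 ≤ (Real.exp (-(p^2/4)))^8 := by
          apply pow_le_pow_left₀ hq0
          linarith [Real.add_one_le_exp (-(p^2/4))]
      _ = Real.exp (-(2*p^2)) := by
          rw [← Real.exp_nat_mul]; norm_num; ring_nf
  have hmain : 1 - p + p * (1/D) ≤ ((1:ℝ) - p^2/4)^8 := by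
    have hc := corePoly p hp0 hp1
    rw [← hts, ← hD] at hc
    have h2 : p * (1/D) ≤ (1 - p^2/4)^8 - 1 + p := by
      rw [mul_one_div, div_le_iff₀ hD0]
      linarith
    linarith
  calc 1 - p + p * Real.exp (-t) ≤ 1 - p + p * (1/D) := by
        have := mul_le_mul_of_nonneg_left hexp hp0
        linarith
    _ ≤ ((1:ℝ) - p^2/4)^8 := hmain
    _ ≤ Real.exp (-(2*p^2)) := h8

lemma chooseBound (δ : ℝ) (hδ0 : 0 < δ) (N m : ℕ) (hm : (m:ℝ) = δ * N) :
    ((N.choose m : ℕ) : ℝ) ≤ Real.exp (m * (1 - Real.log δ)) := by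
  rcases Nat.eq_zero_or_pos m with hm0 | hm1
  · subst hm0; simp
  · have hfac : ((N.choose m : ℕ) : ℝ) ≤ (N:ℝ)^m / (m.factorial : ℝ) := by
      rw [le_div_iff₀ (by positivity)]
      have h1 : N.choose m * m.factorial ≤ N^m := by
        calc N.choose m * m.factorial = m.factorial * N.choose m := by ring
          _ = N.descFactorial m := (Nat.descFactorial_eq_factorial_mul_choose N m).symm
          _ ≤ N^m := Nat.descFactorial_le_pow N m
      exact_mod_cast h1
    have hN : (N:ℝ) = m / δ := by field_simp at hm ⊢; linarith
    have hmm : ((m:ℝ))^m / (m.factorial : ℝ) ≤ Real.exp m := by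
      have h1 : ((m:ℝ))^m / (m.factorial:ℝ) ≤ ∑ i ∈ Finset.range (m+1), (m:ℝ)^i / (i.factorial:ℝ) := by
        exact Finset.single_le_sum (f := fun i => (m:ℝ)^i / (i.factorial:ℝ))
          (fun i _ => by positivity) (Finset.self_mem_range_succ m)
      exact h1.trans (Real.sum_le_exp_of_nonneg (by positivity) (m+1))
    calc ((N.choose m : ℕ) : ℝ) ≤ (N:ℝ)^m / (m.factorial : ℝ) := hfac
      _ = (1/δ)^m * ((m:ℝ)^m / (m.factorial : ℝ)) := by rw [hN]; field_simp; rw [div_pow, one_div_pow]; ring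
      _ ≤ (1/δ)^m * Real.exp m := by
          apply mul_le_mul_of_nonneg_left hmm (by positivity)
      _ = Real.exp (m * (1 - Real.log δ)) := by
          rw [one_div, ← Real.exp_log (inv_pos.mpr hδ0), ← Real.exp_nat_mul, ← Real.exp_add,
            Real.log_inv]
          ring_nf


instance (q : ℝ≥0∞) : IsProbabilityMeasure (bernoulliB q) := by
  unfold bernoulliB; infer_instance

lemma bernoulliB_apply (q : ℝ≥0∞) (b : Bool) :
    bernoulliB q {b} = cond b (min q 1) (1 - min q 1) := by
  rw [bernoulliB, PMF.toMeasure_apply_singleton _ _ (measurableSet_singleton b)]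
  refine (PMF.bernoulli_apply _ b).trans ?_
  have hne : min q 1 ≠ ⊤ := ne_top_of_le_ne_top ENNReal.one_ne_top (min_le_right _ _)
  cases b
  · simp only [Bool.cond_false]
    rw [ENNReal.coe_sub, ENNReal.coe_one, ENNReal.coe_toNNReal hne]
  · simp only [Bool.cond_true]
    exact ENNReal.coe_toNNReal hne

-- weight function
def W {n : ℕ} (p : ℝ) (C : Finset (Fin n)) (e : Sym2 (Fin n)) (b : Bool) : ℝ≥0∞ :=
  bernoulliB (edgeProb p C e) {b}

lemma planted_singleton (n : ℕ) (p : ℝ) (C : Finset (Fin n)) (ω : Sym2 (Fin n) → Bool) :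
    plantedMeasure n p C {ω} = ∏ e, W p C e (ω e) := by
  have : ({ω} : Set (Sym2 (Fin n) → Bool)) = Set.univ.pi (fun e => {ω e}) := by
    ext ρ; simp [funext_iff, Set.mem_pi, eq_comm]
  rw [plantedMeasure, this, Measure.pi_pi]
  rfl

lemma planted_set (n : ℕ) (p : ℝ) (C : Finset (Fin n)) (A : Set (Sym2 (Fin n) → Bool)) :
    plantedMeasure n p C A = ∑ ω ∈ A.toFinset, ∏ e, W p C e (ω e) := by
  have h1 : A = ⋃ ω ∈ A.toFinset, {ω} := by simp
  nth_rewrite 1 [h1]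
  rw [measure_biUnion_finset ?_ ?_]
  · exact Finset.sum_congr rfl fun ω _ => planted_singleton n p C ω
  · intro x _ y _ hxy
    simp [Function.onFun, Set.disjoint_singleton, hxy]
  · intro ω _; exact measurableSet_singleton ω

lemma W_true {n : ℕ} (p : ℝ) (hp1 : p ≤ 1) (C : Finset (Fin n)) (e : Sym2 (Fin n))
    (he : ¬ e.IsDiag ∧ ∃ v ∈ e, v ∈ C) : W p C e true = ENNReal.ofReal p := by
  rw [W, bernoulliB_apply, edgeProb, if_pos he]
  simp [min_eq_left (ENNReal.ofReal_le_one.mpr hp1)]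

lemma W_false {n : ℕ} (p : ℝ) (hp0 : 0 ≤ p) (hp1 : p ≤ 1) (C : Finset (Fin n)) (e : Sym2 (Fin n))
    (he : ¬ e.IsDiag ∧ ∃ v ∈ e, v ∈ C) : W p C e false = ENNReal.ofReal (1 - p) := by
  rw [W, bernoulliB_apply, edgeProb, if_pos he]
  simp only [Bool.cond_false, min_eq_left (ENNReal.ofReal_le_one.mpr hp1)]
  rw [← ENNReal.ofReal_one, ← ENNReal.ofReal_sub _ hp0]

lemma W_total {n : ℕ} (p : ℝ) (hp0 : 0 ≤ p) (hp1 : p ≤ 1) (C : Finset (Fin n))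
    (e : Sym2 (Fin n)) : W p C e true + W p C e false = 1 := by
  by_cases he : ¬ e.IsDiag ∧ ∃ v ∈ e, v ∈ C
  · rw [W_true p hp1 C e he, W_false p hp0 hp1 C e he, ← ENNReal.ofReal_add hp0 (by linarith),
      ← ENNReal.ofReal_one]
    norm_num
  · have h1 : edgeProb p C e = 0 := by rw [edgeProb, if_neg he]
    rw [W, W, bernoulliB_apply, bernoulliB_apply, h1]
    simp

lemma chernoff {n : ℕ} (p : ℝ) (hp : p ∈ Set.Ioo (0:ℝ) 1) (C : Finset (Fin n)) (v : Fin n)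
    (hv : v ∈ C) (S : Finset (Fin n)) (hS : ∀ u ∈ S, u ∉ C) (t a : ℝ) (ht : 0 ≤ t) :
    plantedMeasure n p C {ω | ((S.filter fun u => ω s(v,u) = true).card : ℝ) < a} ≤
      ENNReal.ofReal (Real.exp (t*a) * (1 - p + p * Real.exp (-t)) ^ S.card) := by
  obtain ⟨hp0, hp1⟩ := hp
  set A : Set (Sym2 (Fin n) → Bool) :=
    {ω | ((S.filter fun u => ω s(v,u) = true).card : ℝ) < a} with hA
  set T : Finset (Sym2 (Fin n)) := S.image (fun u => s(v,u)) with hT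
  have hinj : Function.Injective (fun u : Fin n => s(v,u)) := fun b c h => by
    simpa using Sym2.congr_right.mp h
  have hTcard : T.card = S.card := Finset.card_image_of_injective S hinj
  have heT : ∀ e ∈ T, ¬ e.IsDiag ∧ ∃ w ∈ e, w ∈ C := by
    intro e he
    obtain ⟨u, hu, rfl⟩ := Finset.mem_image.mp he
    constructor
    · rw [Sym2.mk_isDiag_iff]
      exact fun h => hS u hu (h ▸ hv)
    · exact ⟨v, Sym2.mem_mk_left v u, hv⟩
  set V : Sym2 (Fin n) → Bool → ℝ≥0∞ := fun e b =>
    W p C e b * (if e ∈ T then ENNReal.ofReal (Real.exp (-t * (cond b 1 0))) else 1) with hV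
  -- pointwise bound
  have hpt : ∀ ω ∈ A.toFinset,
      (∏ e, W p C e (ω e)) ≤ ENNReal.ofReal (Real.exp (t*a)) * ∏ e, V e (ω e) := by
    intro ω hω
    set c : ℝ := ((S.filter fun u => ω s(v,u) = true).card : ℝ) with hcdef
    have hc : c < a := by simpa [hA] using hω
    have hsplit : (∏ e, V e (ω e)) = (∏ e, W p C e (ω e)) *
        ∏ e ∈ T, ENNReal.ofReal (Real.exp (-t * (cond (ω e) 1 0))) := by
      rw [hV, Finset.prod_mul_distrib]
      congr 1
      rw [Finset.prod_ite_mem, Finset.univ_inter]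
    have himg : (∏ e ∈ T, ENNReal.ofReal (Real.exp (-t * (cond (ω e) 1 0)))) =
        ENNReal.ofReal (Real.exp (-t * c)) := by
      rw [hT, Finset.prod_image (fun x _ y _ h => hinj h)]
      rw [← ENNReal.ofReal_prod_of_nonneg (fun u _ => (Real.exp_pos _).le), ← Real.exp_sum]
      congr 2
      rw [← Finset.mul_sum, hcdef, Finset.card_filter]
      push_cast
      congr 1
      refine Finset.sum_congr rfl fun u _ => ?_
      cases ω s(v,u) <;> simp
    have hone : (1:ℝ≥0∞) ≤ ENNReal.ofReal (Real.exp (t*a)) * ENNReal.ofReal (Real.exp (-t*c)) := by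
      rw [← ENNReal.ofReal_mul (Real.exp_pos _).le, ← Real.exp_add, ← ENNReal.ofReal_one]
      apply ENNReal.ofReal_le_ofReal
      rw [← Real.exp_zero]
      apply Real.exp_le_exp.mpr
      nlinarith
    calc (∏ e, W p C e (ω e)) ≤ (∏ e, W p C e (ω e)) *
          (ENNReal.ofReal (Real.exp (t*a)) * ENNReal.ofReal (Real.exp (-t*c))) :=
        le_mul_of_one_le_right' hone
      _ = ENNReal.ofReal (Real.exp (t*a)) *
          ((∏ e, W p C e (ω e)) * ENNReal.ofReal (Real.exp (-t*c))) := by ring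
      _ = ENNReal.ofReal (Real.exp (t*a)) * ∏ e, V e (ω e) := by rw [hsplit, himg]
  -- sum over the space
  have hVsum : ∀ e, V e true + V e false =
      if e ∈ T then ENNReal.ofReal (1 - p + p * Real.exp (-t)) else 1 := by
    intro e
    by_cases he : e ∈ T
    · rw [if_pos he, hV]
      simp only [if_pos he]
      rw [W_true p hp1.le C e (heT e he), W_false p hp0.le hp1.le C e (heT e he)]
      have h1 : (-t * (cond true 1 0) : ℝ) = -t := by simp
      have h2 : (-t * (cond false 1 0) : ℝ) = 0 := by simp
      rw [h1, h2, Real.exp_zero, ENNReal.ofReal_one, mul_one,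
        ← ENNReal.ofReal_mul hp0.le, ← ENNReal.ofReal_add (mul_nonneg hp0.le (Real.exp_pos _).le) (by linarith)]
      congr 1
      ring
    · rw [if_neg he, hV]
      simp only [if_neg he, mul_one]
      exact W_total p hp0.le hp1.le C e
  have hsum : (∑ ω : Sym2 (Fin n) → Bool, ∏ e, V e (ω e)) =
      ENNReal.ofReal (1 - p + p * Real.exp (-t)) ^ S.card := by
    have h1 : (∑ ω : Sym2 (Fin n) → Bool, ∏ e, V e (ω e)) = ∏ e, ∑ b : Bool, V e b := by
      rw [Finset.prod_univ_sum (t := fun _ => (Finset.univ : Finset Bool)) (f := V)]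
      rw [Fintype.piFinset_univ]
    rw [h1]
    have h2 : ∀ e, (∑ b : Bool, V e b) =
        if e ∈ T then ENNReal.ofReal (1 - p + p * Real.exp (-t)) else 1 := by
      intro e; rw [Fintype.sum_bool]; exact hVsum e
    rw [Finset.prod_congr rfl (fun e _ => h2 e), Finset.prod_ite_mem,
      Finset.univ_inter, Finset.prod_const, hTcard]
  calc plantedMeasure n p C A = ∑ ω ∈ A.toFinset, ∏ e, W p C e (ω e) := planted_set n p C A
    _ ≤ ∑ ω ∈ A.toFinset, ENNReal.ofReal (Real.exp (t*a)) * ∏ e, V e (ω e) :=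
        Finset.sum_le_sum hpt
    _ ≤ ∑ ω : Sym2 (Fin n) → Bool, ENNReal.ofReal (Real.exp (t*a)) * ∏ e, V e (ω e) :=
        Finset.sum_le_sum_of_subset (Finset.subset_univ _)
    _ = ENNReal.ofReal (Real.exp (t*a)) * ∑ ω : Sym2 (Fin n) → Bool, ∏ e, V e (ω e) := by
        rw [Finset.mul_sum]
    _ = ENNReal.ofReal (Real.exp (t*a)) * ENNReal.ofReal (1 - p + p * Real.exp (-t)) ^ S.card := by
        rw [hsum]
    _ = ENNReal.ofReal (Real.exp (t*a) * (1 - p + p * Real.exp (-t)) ^ S.card) := by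
        rw [← ENNReal.ofReal_pow (by nlinarith [Real.exp_pos (-t)]), ← ENNReal.ofReal_mul (Real.exp_pos _).le]

lemma finalReal (δ p : ℝ) (hδ : δ ∈ Set.Ioo (0:ℝ) 1) (hp : p ∈ Set.Ioo (0:ℝ) 1)
    (n k m : ℕ) (hn : 1 ≤ n) (hk : (k:ℝ) ≤ Real.log n) (hkn : k ≤ n)
    (hm : (m:ℝ) = δ * ((n:ℝ) - (k:ℝ))) :
    (k:ℝ) * (((n-k).choose m : ℕ) : ℝ) *
      (Real.exp ((6*p-2*p^2) * Real.log n) * (1-p+p*Real.exp (-(6*p-2*p^2)))^m)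
    ≤ Real.exp (-δ*n*(2*p^2 - Real.log (Real.exp 1/δ)) + (6*p+1)*Real.log n) := by
  obtain ⟨hδ0, hδ1⟩ := hδ
  obtain ⟨hp0, hp1⟩ := hp
  have hL0 : (0:ℝ) ≤ Real.log n := Real.log_nonneg (by exact_mod_cast hn)
  have hNcast : (((n-k:ℕ)):ℝ) = (n:ℝ) - (k:ℝ) := by
    rw [Nat.cast_sub hkn]
  have hlogδ : Real.log δ < 0 := Real.log_neg hδ0 hδ1
  have hlogdiv : Real.log (Real.exp 1 / δ) = 1 - Real.log δ := by
    rw [Real.log_div (Real.exp_ne_zero 1) (ne_of_gt hδ0), Real.log_exp]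
  -- bound each factor
  have hkb : (k:ℝ) ≤ Real.exp (Real.log n) :=
    hk.trans (by linarith [Real.add_one_le_exp (Real.log n)])
  have hcb : (((n-k).choose m : ℕ) : ℝ) ≤ Real.exp (m * (1 - Real.log δ)) :=
    chooseBound δ hδ0 (n-k) m (by rw [hNcast]; exact hm)
  have hbase0 : (0:ℝ) ≤ 1-p+p*Real.exp (-(6*p-2*p^2)) := by
    have := Real.exp_pos (-(6*p-2*p^2)); nlinarith
  have hpow : (1-p+p*Real.exp (-(6*p-2*p^2)))^m ≤ Real.exp (-(2*p^2) * m) := by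
    calc (1-p+p*Real.exp (-(6*p-2*p^2)))^m ≤ (Real.exp (-(2*p^2)))^m :=
          pow_le_pow_left₀ hbase0 (coreIneq p hp0.le hp1.le) m
      _ = Real.exp (-(2*p^2) * m) := by rw [← Real.exp_nat_mul]; ring_nf
  have hprod : (k:ℝ) * (((n-k).choose m : ℕ) : ℝ) *
      (Real.exp ((6*p-2*p^2) * Real.log n) * (1-p+p*Real.exp (-(6*p-2*p^2)))^m)
      ≤ Real.exp (Real.log n + m * (1 - Real.log δ) + (6*p-2*p^2) * Real.log n + (-(2*p^2) * m)) := by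
    rw [Real.exp_add, Real.exp_add, Real.exp_add]
    have h1 : (k:ℝ) * (((n-k).choose m : ℕ) : ℝ) ≤
        Real.exp (Real.log n) * Real.exp (m * (1 - Real.log δ)) :=
      mul_le_mul hkb hcb (by positivity) (by positivity)
    have h2 : Real.exp ((6*p-2*p^2) * Real.log n) * (1-p+p*Real.exp (-(6*p-2*p^2)))^m ≤
        Real.exp ((6*p-2*p^2) * Real.log n) * Real.exp (-(2*p^2) * m) :=
      mul_le_mul_of_nonneg_left hpow (by positivity)
    calc (k:ℝ) * (((n-k).choose m : ℕ) : ℝ) *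
        (Real.exp ((6*p-2*p^2) * Real.log n) * (1-p+p*Real.exp (-(6*p-2*p^2)))^m)
        ≤ (Real.exp (Real.log n) * Real.exp (m * (1 - Real.log δ))) *
          (Real.exp ((6*p-2*p^2) * Real.log n) * Real.exp (-(2*p^2) * m)) := by
          apply mul_le_mul h1 h2 (by positivity) (by positivity)
      _ = Real.exp (Real.log n) * Real.exp (m * (1 - Real.log δ)) *
          Real.exp ((6*p-2*p^2) * Real.log n) * Real.exp (-(2*p^2) * m) := by ring
  refine hprod.trans ?_
  apply Real.exp_le_exp.mpr
  rw [hlogdiv, hm]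
  -- goal: linear/quadratic inequality
  have hk0 : (0:ℝ) ≤ (k:ℝ) := Nat.cast_nonneg k
  rcases le_or_gt (2*p^2 - 1 + Real.log δ) 0 with hX | hX
  · nlinarith [mul_nonneg hδ0.le hk0, mul_nonneg (mul_nonneg hδ0.le hk0) (neg_nonneg.mpr hX), sq_nonneg p]
  · nlinarith [mul_le_mul_of_nonneg_right hk (by nlinarith : (0:ℝ) ≤ 2*p^2),
      mul_nonneg hk0 hX.le, mul_le_mul_of_nonneg_right hδ1.le (mul_nonneg hk0 hX.le)]

lemma part1 (δ p : ℝ) (hδ : δ ∈ Set.Ioo (0 : ℝ) 1) (hp : p ∈ Set.Ioo (0 : ℝ) 1)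
    (n k : ℕ) (C : Finset (Fin n)) (hC : C.card = k) (hk : (k : ℝ) ≤ Real.log n)
    (hEm : ∃ m : ℕ, (m : ℝ) = δ * ((n : ℝ) - (k : ℝ))) :
    plantedMeasure n p C {ω | ¬ DeltaHeavy δ (graphOf ω) C} ≤
      ENNReal.ofReal (Real.exp (-δ * n * (2 * p ^ 2 - Real.log (Real.exp 1 / δ)) +
        (6 * p + 1) * Real.log n)) := by
  obtain ⟨m, hm⟩ := hEm
  rcases Nat.eq_zero_or_pos n with hn0 | hn
  · subst hn0
    have hempty : {ω : Sym2 (Fin 0) → Bool | ¬ DeltaHeavy δ (graphOf ω) C} = ∅ := by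
      ext ω
      simp only [Set.mem_setOf_eq, Set.mem_empty_iff_false, iff_false, not_not]
      intro S _ _ v _
      exact v.elim0
    rw [hempty]
    simp
  -- n ≥ 1
  have hn1 : (1:ℝ) ≤ n := by exact_mod_cast hn
  have hkn : k ≤ n := by
    have h1 : (k:ℝ) ≤ (n:ℝ) := (hk.trans (Real.log_le_sub_one_of_pos (by linarith))).trans (by linarith)
    exact_mod_cast h1
  set t : ℝ := 6*p - 2*p^2 with hts
  have ht : 0 ≤ t := by obtain ⟨h1, h2⟩ := hp; nlinarith
  set F : Finset (Fin n) := Finset.univ \ C with hF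
  have hFcard : F.card = n - k := by
    rw [hF, Finset.card_univ_diff, hC, Fintype.card_fin]
  have hFcastR : ((F.card : ℕ) : ℝ) = (n:ℝ) - (k:ℝ) := by
    rw [hFcard, Nat.cast_sub hkn]
  set 𝒮 : Finset (Finset (Fin n)) := F.powersetCard m with h𝒮
  set A : Fin n → Finset (Fin n) → Set (Sym2 (Fin n) → Bool) := fun v S =>
    {ω | ((S.filter fun u => ω s(v,u) = true).card : ℝ) < Real.log n} with hAdef
  have hsub : {ω | ¬ DeltaHeavy δ (graphOf ω) C} ⊆ ⋃ v ∈ C, ⋃ S ∈ 𝒮, A v S := by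
    intro ω hω
    simp only [Set.mem_setOf_eq, DeltaHeavy] at hω
    push_neg at hω
    obtain ⟨S, hSsub, hScard, v, hv, hlt⟩ := hω
    have hSnotC : ∀ u ∈ S, u ∉ C := fun u hu =>
      (Finset.mem_sdiff.mp (hSsub hu)).2
    have hfilter : (S.filter fun u => (graphOf ω).Adj v u) =
        (S.filter fun u => ω s(v,u) = true) := by
      apply Finset.filter_congr
      intro u hu
      have hne : v ≠ u := fun h => hSnotC u hu (h ▸ hv)
      constructor
      · intro h'; obtain ⟨_, h⟩ : v ≠ u ∧ ω s(v, u) = true := h'; simpa using h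
      · intro h; exact (⟨hne, by simpa using h⟩ : v ≠ u ∧ ω s(v, u) = true)
    have hSm : S.card = m := by
      have : (S.card : ℝ) = (m : ℝ) := by rw [hScard, ← hF, hFcastR, hm]
      exact_mod_cast this
    have hS𝒮 : S ∈ 𝒮 := Finset.mem_powersetCard.mpr ⟨by rw [hF]; exact hSsub, hSm⟩
    refine Set.mem_biUnion hv (Set.mem_biUnion hS𝒮 ?_)
    rw [hAdef]
    simp only [Set.mem_setOf_eq]
    rw [← hfilter]
    exact hlt
  have hcard𝒮 : 𝒮.card = (n-k).choose m := by
    rw [h𝒮, Finset.card_powersetCard, hFcard]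
  set bd : ℝ≥0∞ := ENNReal.ofReal
      (Real.exp (t * Real.log n) * (1 - p + p * Real.exp (-t)) ^ m) with hbd
  have hAle : ∀ v ∈ C, ∀ S ∈ 𝒮, plantedMeasure n p C (A v S) ≤ bd := by
    intro v hv S hS𝒮
    obtain ⟨hSsub, hSm⟩ := Finset.mem_powersetCard.mp hS𝒮
    have hSnotC : ∀ u ∈ S, u ∉ C := fun u hu => (Finset.mem_sdiff.mp (hSsub hu)).2
    have := chernoff p hp C v hv S hSnotC t (Real.log n) ht
    rw [hbd, ← hSm]
    exact this
  calc plantedMeasure n p C {ω | ¬ DeltaHeavy δ (graphOf ω) C}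
      ≤ plantedMeasure n p C (⋃ v ∈ C, ⋃ S ∈ 𝒮, A v S) := measure_mono hsub
    _ ≤ ∑ v ∈ C, plantedMeasure n p C (⋃ S ∈ 𝒮, A v S) := measure_biUnion_finset_le C _
    _ ≤ ∑ v ∈ C, ∑ S ∈ 𝒮, plantedMeasure n p C (A v S) :=
        Finset.sum_le_sum fun v _ => measure_biUnion_finset_le 𝒮 _
    _ ≤ ∑ v ∈ C, ∑ S ∈ 𝒮, bd :=
        Finset.sum_le_sum fun v hv => Finset.sum_le_sum fun S hS => hAle v hv S hS
    _ = (C.card : ℝ≥0∞) * (𝒮.card : ℝ≥0∞) * bd := by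
        rw [Finset.sum_const, Finset.sum_const, nsmul_eq_mul, nsmul_eq_mul]
        ring
    _ = ENNReal.ofReal ((k:ℝ) * (((n-k).choose m : ℕ):ℝ) *
          (Real.exp (t * Real.log n) * (1 - p + p * Real.exp (-t)) ^ m)) := by
        rw [hC, hcard𝒮, hbd, ← ENNReal.ofReal_natCast k, ← ENNReal.ofReal_natCast ((n-k).choose m),
          ← ENNReal.ofReal_mul (by positivity), ← ENNReal.ofReal_mul (by positivity)]
    _ ≤ ENNReal.ofReal (Real.exp (-δ * n * (2 * p ^ 2 - Real.log (Real.exp 1 / δ)) +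
          (6 * p + 1) * Real.log n)) := by
        apply ENNReal.ofReal_le_ofReal
        have := finalReal δ p hδ hp n k m (by exact_mod_cast hn) hk hkn hm
        rw [hts]
        convert this using 3


/-- For `G` drawn from `M(n,k,p)` with constants `δ, p ∈ (0,1)` and `k ≤ ln n` (with
`δ(n−k)` an integer), the probability that `G` is not `δ`-heavy is at most
`exp(−δn(2p² − ln(e/δ)) + (6p+1)·ln n)`; in particular, if `p > √((1 − ln δ)/2)` then `G` is
`δ`-heavy with probability `1 − e^{−Ω(n)}`. -/
theorem stmt5 (δ p : ℝ) (hδ : δ ∈ Set.Ioo (0 : ℝ) 1) (hp : p ∈ Set.Ioo (0 : ℝ) 1) :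
    (∀ (n k : ℕ) (C : Finset (Fin n)), C.card = k → (k : ℝ) ≤ Real.log n →
      (∃ m : ℕ, (m : ℝ) = δ * ((n : ℝ) - (k : ℝ))) →
      plantedMeasure n p C {ω | ¬ DeltaHeavy δ (graphOf ω) C} ≤
        ENNReal.ofReal (Real.exp (-δ * n * (2 * p ^ 2 - Real.log (Real.exp 1 / δ)) +
          (6 * p + 1) * Real.log n)))
    ∧ (Real.sqrt ((1 - Real.log δ) / 2) < p →
        ∃ c > (0 : ℝ), ∀ᶠ n : ℕ in atTop, ∀ (k : ℕ) (C : Finset (Fin n)),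
          C.card = k → (k : ℝ) ≤ Real.log n →
          (∃ m : ℕ, (m : ℝ) = δ * ((n : ℝ) - (k : ℝ))) →
          plantedMeasure n p C {ω | ¬ DeltaHeavy δ (graphOf ω) C} ≤
            ENNReal.ofReal (Real.exp (-c * n))) := by
  obtain ⟨hδ0, hδ1⟩ := hδ
  obtain ⟨hp0, hp1⟩ := hp
  constructor
  · exact fun n k C hC hk hEm => part1 δ p ⟨hδ0, hδ1⟩ ⟨hp0, hp1⟩ n k C hC hk hEm
  · intro hsq
    set X : ℝ := 2 * p ^ 2 - (1 - Real.log δ) with hX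
    have hlogδ : Real.log δ < 0 := Real.log_neg hδ0 hδ1
    have hXpos : 0 < X := by
      have h0 : (0:ℝ) ≤ (1 - Real.log δ) / 2 := by linarith
      have h2 : (1 - Real.log δ) / 2 < p ^ 2 := by
        have := Real.sq_sqrt h0
        nlinarith [Real.sqrt_nonneg ((1 - Real.log δ) / 2)]
      rw [hX]; linarith
    have hlogdiv : Real.log (Real.exp 1 / δ) = 1 - Real.log δ := by
      rw [Real.log_div (Real.exp_ne_zero 1) (ne_of_gt hδ0), Real.log_exp]
    set c : ℝ := δ * X / 2 with hc
    have hc0 : 0 < c := by positivity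
    set Q : ℝ := 4 * (6 * p + 1) / (δ * X) with hQ
    have hQ0 : 0 < Q := by positivity
    clear_value X c Q
    refine ⟨c, hc0, ?_⟩
    rw [eventually_atTop]
    refine ⟨max 1 ⌈Q ^ 2⌉₊, fun n hn k C hC hk hEm => ?_⟩
    have hn1 : 1 ≤ n := le_trans (le_max_left _ _) hn
    have hnQ : Q ^ 2 ≤ (n : ℝ) := by
      calc Q ^ 2 ≤ (⌈Q ^ 2⌉₊ : ℝ) := Nat.le_ceil _
        _ ≤ (n : ℝ) := by exact_mod_cast le_trans (le_max_right _ _) hn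
    have hsqn : Q ≤ Real.sqrt n := by
      calc Q = Real.sqrt (Q ^ 2) := (Real.sqrt_sq hQ0.le).symm
        _ ≤ Real.sqrt n := Real.sqrt_le_sqrt hnQ
    have hlogn : Real.log n ≤ 2 * Real.sqrt n := by
      have h1 : Real.log (Real.sqrt n) ≤ Real.sqrt n - 1 :=
        Real.log_le_sub_one_of_pos (Real.sqrt_pos.mpr (by exact_mod_cast hn1))
      rw [Real.log_sqrt (Nat.cast_nonneg n)] at h1
      linarith
    have hmain : -δ * n * (2 * p ^ 2 - Real.log (Real.exp 1 / δ)) + (6 * p + 1) * Real.log n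
        ≤ -c * n := by
      rw [hlogdiv, ← hX, hc]
      have hsq2 : Real.sqrt n * Real.sqrt n = (n:ℝ) := Real.mul_self_sqrt (Nat.cast_nonneg n)
      have h2 : (6 * p + 1) * Real.log n ≤ (6 * p + 1) * (2 * Real.sqrt n) :=
        mul_le_mul_of_nonneg_left hlogn (by linarith)
      have h3 : (6 * p + 1) * (2 * Real.sqrt n) ≤ δ * X / 2 * (Real.sqrt n * Real.sqrt n) := by
        have h4 : 4 * (6 * p + 1) ≤ δ * X * Real.sqrt n := by
          rw [hQ] at hsqn
          rw [div_le_iff₀ (by positivity)] at hsqn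
          nlinarith
        nlinarith [Real.sqrt_nonneg (n:ℝ), mul_le_mul_of_nonneg_right h4 (Real.sqrt_nonneg (n:ℝ))]
      rw [hsq2] at h3
      nlinarith
    calc plantedMeasure n p C {ω | ¬ DeltaHeavy δ (graphOf ω) C}
        ≤ ENNReal.ofReal (Real.exp (-δ * n * (2 * p ^ 2 - Real.log (Real.exp 1 / δ)) +
            (6 * p + 1) * Real.log n)) := part1 δ p ⟨hδ0, hδ1⟩ ⟨hp0, hp1⟩ n k C hC hk hEm
      _ ≤ ENNReal.ofReal (Real.exp (-c * n)) :=
          ENNReal.ofReal_le_ofReal (Real.exp_le_exp.mpr hmain)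
end
end

section
/- Let G be drawn from the M(n,k,p) model with p ∈ (0,1] and k = ω(1). Then with probability 1 − o(1) (indeed with probability at least 1 − e^{−(ln k)²}), the largest independent set of G contained in the core C has size at most (1 + 2/p)·ln k + 1. -/
open MeasureTheory ProbabilityTheory Real Filter
open scoped ENNReal Classical

noncomputable section

/-- `S` is an independent set of `G`. -/
def IsIndepSet {n : ℕ} (G : SimpleGraph (Fin n)) (S : Finset (Fin n)) : Prop :=
  ∀ u ∈ S, ∀ v ∈ S, ¬ G.Adj u v

/-- Every independent set of `G` contained in the core `C` has size at most `b`. -/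
def CoreIndepAtMost {n : ℕ} (G : SimpleGraph (Fin n)) (C : Finset (Fin n)) (b : ℝ) : Prop :=
  ∀ S ⊆ C, IsIndepSet G S → (S.card : ℝ) ≤ b

instance inst_s11 (q : ℝ≥0∞) : IsProbabilityMeasure (bernoulliB q) := PMF.toMeasure.isProbabilityMeasure _

lemma bernoulliB_false (q : ℝ≥0∞) : bernoulliB q {false} = 1 - min q 1 := by
  rw [bernoulliB, PMF.toMeasure_apply_singleton _ _ (measurableSet_singleton _),
    ]
  erw [PMF.bernoulli_apply]
  simp [ENNReal.coe_toNNReal (ne_top_of_le_ne_top ENNReal.one_ne_top (min_le_right q 1))]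

lemma single_indep {n : ℕ} (p : ℝ) (hp : p ∈ Set.Ioc (0:ℝ) 1) (C S : Finset (Fin n))
    (hS : S ⊆ C) :
    plantedMeasure n p C {ω | IsIndepSet (graphOf ω) S}
      = ENNReal.ofReal (1 - p) ^ (S.card.choose 2) := by
  classical
  set E : Finset (Sym2 (Fin n)) := S.offDiag.image Sym2.mk.uncurry with hE
  have hmem : ∀ e : Sym2 (Fin n), e ∈ E ↔ ¬ e.IsDiag ∧ ∀ v ∈ e, v ∈ S := by
    intro e
    induction e using Sym2.ind with
    | _ x y =>
      simp only [hE, Finset.mem_image, Finset.mem_offDiag, Sym2.isDiag_iff_proj_eq, Sym2.mem_iff]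
      constructor
      · rintro ⟨⟨a, b⟩, ⟨ha, hb, hab⟩, h⟩
        rcases Sym2.eq_iff.1 h with ⟨rfl, rfl⟩ | ⟨rfl, rfl⟩
        · exact ⟨hab, by rintro v (rfl|rfl) <;> assumption⟩
        · exact ⟨fun h => hab h.symm, by rintro v (rfl|rfl) <;> assumption⟩
      · rintro ⟨hxy, hv⟩
        exact ⟨(x, y), ⟨hv x (Or.inl rfl), hv y (Or.inr rfl), hxy⟩, rfl⟩
  have hset : {ω : Sym2 (Fin n) → Bool | IsIndepSet (graphOf ω) S}
      = Set.pi Set.univ (fun e => if e ∈ E then ({false} : Set Bool) else Set.univ) := by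
    ext ω
    simp only [Set.mem_setOf_eq, Set.mem_pi, Set.mem_univ, forall_true_left]
    constructor
    · intro h e
      by_cases he : e ∈ E
      · simp only [he, if_true, Set.mem_singleton_iff]
        induction e using Sym2.ind with
        | _ x y =>
          obtain ⟨hd, hv⟩ := (hmem _).1 he
          have hx := hv x (Sym2.mem_mk_left x y)
          have hy := hv y (Sym2.mem_mk_right x y)
          have hxy : x ≠ y := fun hh => hd (by simp [hh])
          have := h x hx y hy
          simp only [graphOf, ne_eq] at this
          rcases Bool.eq_false_or_eq_true (ω s(x,y)) with h' | h'
          · exact absurd ⟨hxy, h'⟩ this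
          · exact h'
      · simp [he]
    · intro h u hu v hv hadj
      obtain ⟨huv, he⟩ := hadj
      have heE : s(u, v) ∈ E := by
        refine (hmem _).2 ⟨by simpa using huv, ?_⟩
        rintro w hw
        rcases Sym2.mem_iff.1 hw with rfl | rfl <;> assumption
      have := h s(u, v)
      simp only [heE, if_true, Set.mem_singleton_iff] at this
      rw [this] at he
      exact Bool.false_ne_true he
  rw [hset, plantedMeasure, Measure.pi_pi]
  have hprob : ∀ e, e ∈ E → bernoulliB (edgeProb p C e)
      (if e ∈ E then ({false} : Set Bool) else Set.univ) = ENNReal.ofReal (1 - p) := by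
    intro e he
    obtain ⟨hd, hv⟩ := (hmem e).1 he
    have hep : edgeProb p C e = ENNReal.ofReal p := by
      rw [edgeProb, if_pos]
      induction e using Sym2.ind with
      | _ x y => exact ⟨hd, x, Sym2.mem_mk_left x y, hS (hv _ (Sym2.mem_mk_left x y))⟩
    rw [if_pos he, bernoulliB_false, hep,
      min_eq_left (ENNReal.ofReal_le_one.2 hp.2), ← ENNReal.ofReal_one,
      ← ENNReal.ofReal_sub _ hp.1.le]
  calc ∏ e : Sym2 (Fin n), bernoulliB (edgeProb p C e)
        (if e ∈ E then ({false} : Set Bool) else Set.univ)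
      = ∏ e ∈ E, bernoulliB (edgeProb p C e)
        (if e ∈ E then ({false} : Set Bool) else Set.univ) := by
        refine (Finset.prod_subset (Finset.subset_univ E) ?_).symm
        intro e _ he
        rw [if_neg he]
        exact measure_univ
    _ = ∏ _e ∈ E, ENNReal.ofReal (1 - p) := Finset.prod_congr rfl hprob
    _ = ENNReal.ofReal (1 - p) ^ E.card := Finset.prod_const _
    _ = ENNReal.ofReal (1 - p) ^ (S.card.choose 2) := by rw [hE, Sym2.card_image_offDiag]


lemma main_bound {n : ℕ} (p : ℝ) (hp : p ∈ Set.Ioc (0:ℝ) 1) (C : Finset (Fin n))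
    (hk2 : 2 ≤ C.card) :
    plantedMeasure n p C
        {ω | ¬ CoreIndepAtMost (graphOf ω) C ((1 + 2 / p) * Real.log C.card + 1)}
      ≤ ENNReal.ofReal (Real.exp (-(Real.log C.card) ^ 2)) := by
  classical
  obtain ⟨hp0, hp1⟩ := hp
  set K : ℕ := C.card with hK
  set L : ℝ := Real.log K with hL
  have hL0 : 0 < L := Real.log_pos (by exact_mod_cast hk2)
  set b : ℝ := (1 + 2 / p) * L + 1 with hb
  have hb0 : 0 ≤ b := by positivity
  set t : ℕ := ⌊b⌋₊ + 1 with ht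
  have hbt : b < t := by exact_mod_cast Nat.lt_floor_add_one b
  -- inclusion in a union
  have hsub : {ω : Sym2 (Fin n) → Bool | ¬ CoreIndepAtMost (graphOf ω) C b}
      ⊆ ⋃ S ∈ C.powersetCard t, {ω | IsIndepSet (graphOf ω) S} := by
    intro ω hω
    simp only [Set.mem_setOf_eq, CoreIndepAtMost, not_forall] at hω
    obtain ⟨S, hSC, hSind, hScard⟩ := hω
    push_neg at hScard
    have htS : t ≤ S.card := by
      have : ⌊b⌋₊ < S.card := (Nat.floor_lt hb0).2 hScard
      omega
    obtain ⟨S', hS'S, hS'card⟩ := Finset.exists_subset_card_eq htS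
    refine Set.mem_biUnion (Finset.mem_powersetCard.2 ⟨hS'S.trans hSC, hS'card⟩) ?_
    exact fun u hu v hv => hSind u (hS'S hu) v (hS'S hv)
  have hunion : plantedMeasure n p C {ω | ¬ CoreIndepAtMost (graphOf ω) C b}
      ≤ (K.choose t : ℝ≥0∞) * ENNReal.ofReal (1 - p) ^ (t.choose 2) := by
    refine (measure_mono hsub).trans ((measure_biUnion_finset_le _ _).trans ?_)
    have : ∀ S ∈ C.powersetCard t,
        plantedMeasure n p C {ω | IsIndepSet (graphOf ω) S}
          = ENNReal.ofReal (1 - p) ^ (t.choose 2) := by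
      intro S hS
      obtain ⟨hSC, hScard⟩ := Finset.mem_powersetCard.1 hS
      rw [single_indep p ⟨hp0, hp1⟩ C S hSC, hScard]
    rw [Finset.sum_congr rfl this, Finset.sum_const, Finset.card_powersetCard, nsmul_eq_mul]
  -- pass to reals
  have hKt : ((K.choose t : ℕ) : ℝ≥0∞) ≤ ENNReal.ofReal ((K : ℝ) ^ t) := by
    rw [← ENNReal.ofReal_natCast]
    exact ENNReal.ofReal_le_ofReal (by exact_mod_cast Nat.choose_le_pow K t)
  have h1p : (0:ℝ) ≤ 1 - p := by linarith
  have hofp : ENNReal.ofReal (1 - p) ^ (t.choose 2)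
      = ENNReal.ofReal ((1 - p) ^ (t.choose 2)) := (ENNReal.ofReal_pow h1p _).symm
  have hreal : (K : ℝ) ^ t * (1 - p) ^ (t.choose 2) ≤ Real.exp (-L ^ 2) := by
    have hc : ((t.choose 2 : ℕ) : ℝ) = (t : ℝ) * ((t : ℝ) - 1) / 2 := by
      rw [Nat.cast_choose_two]
    have hexpL : Real.exp L = (K:ℝ) := Real.exp_log (by positivity)
    have hKpow : (K : ℝ) ^ t = Real.exp ((t : ℝ) * L) := by
      rw [← hexpL, ← Real.exp_nat_mul]
    have hppow : (1 - p) ^ (t.choose 2) ≤ Real.exp (-(p * ((t.choose 2 : ℕ) : ℝ))) := by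
      calc (1 - p) ^ (t.choose 2) ≤ Real.exp (-p) ^ (t.choose 2) := by
            apply pow_le_pow_left₀ h1p
            linarith [Real.add_one_le_exp (-p)]
        _ = Real.exp (((t.choose 2 : ℕ) : ℝ) * (-p)) := (Real.exp_nat_mul _ _).symm
        _ = Real.exp (-(p * ((t.choose 2 : ℕ) : ℝ))) := by ring_nf
    have hmul : (K : ℝ) ^ t * (1 - p) ^ (t.choose 2)
        ≤ Real.exp ((t : ℝ) * L - p * ((t.choose 2 : ℕ) : ℝ)) := by
      rw [hKpow]
      calc Real.exp ((t:ℝ)*L) * (1-p)^(t.choose 2)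
          ≤ Real.exp ((t:ℝ)*L) * Real.exp (-(p * ((t.choose 2 : ℕ) : ℝ))) :=
            mul_le_mul_of_nonneg_left hppow (Real.exp_pos _).le
        _ = Real.exp ((t:ℝ)*L + -(p * ((t.choose 2 : ℕ) : ℝ))) := (Real.exp_add _ _).symm
        _ = Real.exp ((t:ℝ)*L - p * ((t.choose 2 : ℕ) : ℝ)) := by ring_nf
    refine hmul.trans (Real.exp_le_exp.2 ?_)
    rw [hc]
    set T : ℝ := (t : ℝ) with hT
    have hTb : b < T := hbt
    have h1 : p * (T - 1) ≥ (p + 2) * L := by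
      have : T - 1 > (1 + 2/p) * L := by rw [hb] at hTb; linarith
      have := mul_lt_mul_of_pos_left this hp0
      have hfield : p * ((1 + 2/p) * L) = (p + 2) * L := by
        field_simp
      linarith [hfield ▸ this]
    have h2 : p * T ≥ 2 * L := by
      have hT2 : T > (2/p) * L := by
        have : (1 + 2/p) * L + 1 ≥ (2/p) * L := by
          have : L ≥ 0 := hL0.le
          nlinarith [div_nonneg (by norm_num : (0:ℝ) ≤ 2) hp0.le]
        rw [hb] at hTb; linarith
      have := mul_lt_mul_of_pos_left hT2 hp0
      have hfield : p * ((2/p) * L) = 2 * L := by field_simp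
      linarith [hfield ▸ this]
    have hT0 : 0 < T := by
      have : (0:ℝ) < b + 1 := by linarith
      linarith
    nlinarith [mul_le_mul_of_nonneg_left h1 (le_of_lt hT0), mul_pos hL0 hT0,
      mul_le_mul_of_nonneg_left h2 hL0.le]
  calc plantedMeasure n p C {ω | ¬ CoreIndepAtMost (graphOf ω) C b}
      ≤ (K.choose t : ℝ≥0∞) * ENNReal.ofReal (1 - p) ^ (t.choose 2) := hunion
    _ ≤ ENNReal.ofReal ((K : ℝ) ^ t) * ENNReal.ofReal ((1 - p) ^ (t.choose 2)) := by
        rw [hofp] at *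
        exact mul_le_mul_left hKt _
    _ = ENNReal.ofReal ((K : ℝ) ^ t * (1 - p) ^ (t.choose 2)) := by
        rw [← ENNReal.ofReal_mul (by positivity)]
    _ ≤ ENNReal.ofReal (Real.exp (-L ^ 2)) := ENNReal.ofReal_le_ofReal hreal


/-- For `G` drawn from `M(n,k,p)` with `p ∈ (0,1]` and `k = k(n) = ω(1)`, with probability
`1 − o(1)` (indeed, eventually with probability at least `1 − e^{−(ln k)²}`), the largest
independent set of `G` contained in the core has size at most `(1 + 2/p)·ln k + 1`. -/
theorem stmt11 (p : ℝ) (hp : p ∈ Set.Ioc (0 : ℝ) 1)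
    (k : ℕ → ℕ) (hk : Tendsto k atTop atTop)
    (C : ∀ n : ℕ, Finset (Fin n)) (hC : ∀ n, (C n).card = k n) :
    (∀ᶠ n : ℕ in atTop,
      plantedMeasure n p (C n)
          {ω | ¬ CoreIndepAtMost (graphOf ω) (C n) ((1 + 2 / p) * Real.log (k n) + 1)} ≤
        ENNReal.ofReal (Real.exp (-(Real.log (k n)) ^ 2)))
    ∧ Tendsto
        (fun n : ℕ => plantedMeasure n p (C n)
          {ω | ¬ CoreIndepAtMost (graphOf ω) (C n) ((1 + 2 / p) * Real.log (k n) + 1)})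
        atTop (nhds 0) := by
  have hA : ∀ᶠ n : ℕ in atTop,
      plantedMeasure n p (C n)
          {ω | ¬ CoreIndepAtMost (graphOf ω) (C n) ((1 + 2 / p) * Real.log (k n) + 1)} ≤
        ENNReal.ofReal (Real.exp (-(Real.log (k n)) ^ 2)) := by
    filter_upwards [hk.eventually_ge_atTop 2] with n hn
    have h := main_bound p hp (C n) (by rw [hC n]; exact hn)
    rw [hC n] at h
    exact h
  refine ⟨hA, ?_⟩
  have hub : Tendsto (fun n : ℕ => ENNReal.ofReal (Real.exp (-(Real.log (k n)) ^ 2)))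
      atTop (nhds 0) := by
    have h1 : Tendsto (fun n : ℕ => ((k n : ℝ))) atTop atTop :=
      tendsto_natCast_atTop_atTop.comp hk
    have h2 : Tendsto (fun n : ℕ => Real.log (k n)) atTop atTop :=
      Real.tendsto_log_atTop.comp h1
    have h3 : Tendsto (fun n : ℕ => -(Real.log (k n)) ^ 2) atTop atBot := by
      have := (h2.atTop_mul_atTop₀ h2)
      simpa [sq, neg_mul] using this
    have h4 : Tendsto (fun n : ℕ => Real.exp (-(Real.log (k n)) ^ 2)) atTop (nhds 0) :=
      Real.tendsto_exp_atBot.comp h3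
    have := (ENNReal.continuous_ofReal.tendsto 0).comp h4
    simpa [Function.comp_def] using this
  exact tendsto_of_tendsto_of_tendsto_of_le_of_le' tendsto_const_nhds hub
    (Eventually.of_forall fun n => zero_le) hA
end
end
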